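/- arXiv:2501.03828 — 4 statements merged into one kernel-verified Lean document; each statement's English description precedes it below -/
import Mathlib

section
/- Let f ∈ ℂ[x] be a polynomial of degree d ≥ 1. For each c ∈ ℂ let ℓ(c) denote the number of distinct roots of f − c in ℂ. Then d − ℓ(c) = 0 for all but finitely many c, and the sum over all c ∈ ℂ of (d − ℓ(c)) equals d − 1. -/
open Polynomial

/-- Riemann–Hurwitz for a degree-`d` polynomial `ℂ → ℂ`:
with `ℓ(c)` the number of distinct roots of `f − c`, one has `d − ℓ(c) = 0` for all but
finitely many `c`, and `∑_c (d − ℓ(c)) = d − 1`. -/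
theorem stmt_5 (f : Polynomial ℂ) (hd : 1 ≤ f.natDegree) :
    ({c : ℂ | f.natDegree - ((f - Polynomial.C c).roots.toFinset.card) ≠ 0}.Finite) ∧
    (∑ᶠ c : ℂ, (f.natDegree - ((f - Polynomial.C c).roots.toFinset.card)))
      = f.natDegree - 1 := by
  set d := f.natDegree with hdd
  set g := derivative f with hg
  have hgne : g ≠ 0 := by
    intro h
    have := natDegree_eq_zero_of_derivative_eq_zero h
    omega
  have hgdeg : g.natDegree = d - 1 := by
    have h1 : g.natDegree ≤ d - 1 := natDegree_derivative_le f
    have h2 : d - 1 ≤ g.natDegree := by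
      apply le_natDegree_of_ne_zero
      rw [hg, coeff_derivative, Nat.sub_add_cancel hd]
      have hf0 : f.coeff d ≠ 0 := by
        have hne : f ≠ 0 := fun h => by simp [hdd, h] at hd
        have := leadingCoeff_ne_zero.2 hne
        rwa [Polynomial.leadingCoeff, ← hdd] at this
      have h1 : ((d - 1 : ℕ) : ℂ) + 1 ≠ 0 := by
        have := Nat.cast_add_one_ne_zero (R := ℂ) (d - 1)
        simpa using this
      exact mul_ne_zero hf0 h1
    omega
  have key : ∀ c : ℂ, d - ((f - C c).roots.toFinset.card) =
      Multiset.count c (g.roots.map f.eval) := by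
    intro c
    set p := f - C c with hp
    have hpdeg : p.natDegree = d := natDegree_sub_C
    have hpne : p ≠ 0 := fun h => by simp [h] at hpdeg; omega
    have hroots : p.roots.card = d := by
      rw [← hpdeg, ← splits_iff_card_roots]
      exact IsAlgClosed.splits p
    have hder : derivative p = g := by rw [hp]; simp [hg]
    set S := p.roots.toFinset with hS
    have hsum : ∑ a ∈ S, p.roots.count a = d := by
      rw [Multiset.toFinset_sum_count_eq, hroots]
    have hmem : ∀ a ∈ S, 1 ≤ p.roots.count a := fun a ha => by
      rw [Multiset.one_le_count_iff_mem]; exact Multiset.mem_toFinset.1 ha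
    have hstep : ∀ a ∈ S, p.roots.count a - 1 = g.roots.count a := by
      intro a ha
      have harr : p.IsRoot a := isRoot_of_mem_roots (Multiset.mem_toFinset.1 ha)
      rw [count_roots, count_roots, ← hder, derivative_rootMultiplicity_of_root harr]
    have h1 : d - S.card = ∑ a ∈ S, g.roots.count a := by
      have e : ∑ a ∈ S, g.roots.count a = ∑ a ∈ S, (p.roots.count a - 1) :=
        Finset.sum_congr rfl (fun a ha => (hstep a ha).symm)
      have e2 : ∑ a ∈ S, (p.roots.count a - 1) + S.card = ∑ a ∈ S, p.roots.count a := by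
        calc ∑ a ∈ S, (p.roots.count a - 1) + S.card
            = ∑ a ∈ S, ((p.roots.count a - 1) + 1) := by
              rw [Finset.sum_add_distrib, Finset.sum_const, smul_eq_mul, mul_one]
          _ = ∑ a ∈ S, p.roots.count a :=
              Finset.sum_congr rfl (fun a ha => Nat.sub_add_cancel (hmem a ha))
      omega
    have h2 : Multiset.count c (g.roots.map f.eval) = ∑ a ∈ S, g.roots.count a := by
      rw [Multiset.count_map]
      set t := g.roots.filter (fun a => c = f.eval a) with ht
      have hsubt : t.toFinset ⊆ g.roots.toFinset := by
        intro a ha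
        rw [Multiset.mem_toFinset] at *
        exact Multiset.mem_of_mem_filter ha
      have hcard : t.card = ∑ a ∈ g.roots.toFinset, t.count a := by
        rw [← Multiset.toFinset_sum_count_eq t]
        apply Finset.sum_subset hsubt
        intro a _ ha
        rw [Multiset.count_eq_zero]
        exact fun h => ha (Multiset.mem_toFinset.2 h)
      rw [hcard]
      have e : ∀ a ∈ g.roots.toFinset,
          t.count a = if c = f.eval a then g.roots.count a else 0 :=
        fun a _ => Multiset.count_filter
      rw [Finset.sum_congr rfl e, ← Finset.sum_filter]
      apply Finset.sum_subset
      · intro a ha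
        rw [Finset.mem_filter, Multiset.mem_toFinset, mem_roots hgne] at ha
        rw [hS, Multiset.mem_toFinset, mem_roots hpne]
        simp only [hp, IsRoot, eval_sub, eval_C, sub_eq_zero]
        exact ha.2.symm
      · intro a haS haT
        rw [Multiset.count_eq_zero, ← Multiset.mem_toFinset]
        intro hmemg
        apply haT
        rw [Finset.mem_filter]
        refine ⟨hmemg, ?_⟩
        rw [hS, Multiset.mem_toFinset, mem_roots hpne] at haS
        have := haS
        simp only [hp, IsRoot, eval_sub, eval_C, sub_eq_zero] at this
        exact this.symm
    rw [h1, h2]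
  have hsupp : (Function.support fun c : ℂ =>
      d - ((f - C c).roots.toFinset.card)) ⊆ ↑(g.roots.map f.eval).toFinset := by
    intro c hc
    rw [Function.mem_support, key c] at hc
    exact Finset.mem_coe.2 (Multiset.mem_toFinset.2 (Multiset.count_ne_zero.mp hc))
  constructor
  · exact Set.Finite.subset (Finset.finite_toSet _) hsupp
  · rw [finsum_eq_finset_sum_of_support_subset _ hsupp]
    have : ∑ c ∈ (g.roots.map f.eval).toFinset, (d - ((f - C c).roots.toFinset.card)) =
        ∑ c ∈ (g.roots.map f.eval).toFinset, (g.roots.map f.eval).count c :=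
      Finset.sum_congr rfl (fun c _ => key c)
    rw [this, Multiset.toFinset_sum_count_eq, Multiset.card_map]
    rw [← hgdeg, ← splits_iff_card_roots]
    exact IsAlgClosed.splits g
end

section
/- Every injective polynomial map f : ℂⁿ → ℂⁿ is surjective, hence bijective. -/
/-- Ax–Grothendieck: an injective polynomial map `ℂⁿ → ℂⁿ` is surjective, hence bijective. -/
theorem stmt_6 (n : ℕ) (f : (Fin n → ℂ) → (Fin n → ℂ))
    (hpoly : ∃ F : Fin n → MvPolynomial (Fin n) ℂ,
      ∀ x i, f x i = MvPolynomial.eval x (F i))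
    (hinj : Function.Injective f) :
    Function.Surjective f ∧ Function.Bijective f := by
  obtain ⟨F, hF⟩ := hpoly
  have hfeq : f = fun v i => MvPolynomial.eval v (F i) := by
    funext v i; exact hF v i
  have hsurj : Function.Surjective f := by
    rw [hfeq] at hinj ⊢
    exact ax_grothendieck_univ F hinj
  exact ⟨hsurj, hinj, hsurj⟩
end

section
/- Let f = (f₁, …, fₙ) : ℝⁿ → ℝⁿ (or ℂⁿ → ℂⁿ) be a polynomial map in which every coordinate fᵢ is a polynomial of total degree at most 2. If the determinant of the Jacobian matrix of f is nonzero at every point, then f is injective. -/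
open MvPolynomial

lemma classify_deg2 {n : ℕ} (d : Fin n →₀ ℕ) (h : (d.sum fun _ e => e) ≤ 2) :
    d = 0 ∨ (∃ j, d = Finsupp.single j 1) ∨
      ∃ j k, d = Finsupp.single j 1 + Finsupp.single k 1 := by
  have hc : Multiset.card d.toMultiset ≤ 2 := by
    rw [Finsupp.card_toMultiset]; exact h
  have hd : d = Multiset.toFinsupp d.toMultiset := by simp
  interval_cases hcard : Multiset.card d.toMultiset
  · left
    rw [Multiset.card_eq_zero] at hcard
    rw [hd, hcard]; simp
  · right; left
    rw [Multiset.card_eq_one] at hcard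
    obtain ⟨a, ha⟩ := hcard
    exact ⟨a, by rw [hd, ha, Multiset.toFinsupp_singleton]⟩
  · right; right
    rw [Multiset.card_eq_two] at hcard
    obtain ⟨a, b, hab⟩ := hcard
    refine ⟨a, b, ?_⟩
    rw [hd, hab]
    have : ({a, b} : Multiset (Fin n)) = {a} + {b} := rfl
    rw [this, map_add, Multiset.toFinsupp_singleton, Multiset.toFinsupp_singleton]

lemma key_mono {𝕜 : Type*} [RCLike 𝕜] {n : ℕ} (d : Fin n →₀ ℕ) (c : 𝕜)
    (hd : (d.sum fun _ e => e) ≤ 2) (a b : Fin n → 𝕜) :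
    eval a (monomial d c) - eval b (monomial d c) =
      ∑ j, eval (fun i => (a i + b i) / 2) (pderiv j (monomial d c)) * (a j - b j) := by
  have h2 : (2 : 𝕜) ≠ 0 := two_ne_zero
  rcases classify_deg2 d hd with rfl | ⟨j, rfl⟩ | ⟨j, k, rfl⟩
  · simp
  · have : monomial (Finsupp.single j 1) c = C c * X j := by
      rw [← zero_add (Finsupp.single j 1), monomial_add_single, pow_one, monomial_zero']
    rw [this]
    simp only [pderiv_mul, map_add, map_mul, eval_C, eval_X, pderiv_C, pderiv_X,
      Pi.single_apply, mul_zero, zero_mul, add_zero, zero_add, mul_one, one_mul,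
      apply_ite (eval fun i => (a i + b i) / 2), map_zero, mul_ite, ite_mul,
      Finset.sum_ite_eq', Finset.sum_ite_eq, Finset.mem_univ, if_true]
    field_simp
  · have : monomial (Finsupp.single j 1 + Finsupp.single k 1) c = C c * X j * X k := by
      rw [monomial_add_single, pow_one, ← zero_add (Finsupp.single j 1),
        monomial_add_single, pow_one, monomial_zero']
    rw [this]
    simp only [pderiv_mul, map_add, map_mul, eval_C, eval_X, pderiv_C, pderiv_X,
      Pi.single_apply, mul_zero, zero_mul, add_zero, zero_add, mul_one, one_mul,
      apply_ite (eval fun i => (a i + b i) / 2), map_zero, mul_ite, ite_mul, mul_add, add_mul,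
      Finset.sum_add_distrib, Finset.sum_ite_eq', Finset.sum_ite_eq, Finset.mem_univ, if_true]
    field_simp
    ring

lemma key_lemma {𝕜 : Type*} [RCLike 𝕜] {n : ℕ} (p : MvPolynomial (Fin n) 𝕜)
    (hp : p.totalDegree ≤ 2) (a b : Fin n → 𝕜) :
    eval a p - eval b p =
      ∑ j, eval (fun i => (a i + b i) / 2) (pderiv j p) * (a j - b j) := by
  conv_lhs => rw [p.as_sum]
  conv_rhs => rw [p.as_sum]
  simp only [map_sum, Finset.sum_sub_distrib, Finset.sum_mul]
  rw [← Finset.sum_sub_distrib, Finset.sum_comm]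
  refine Finset.sum_congr rfl fun d hdmem => ?_
  exact key_mono d _ (le_trans (le_totalDegree hdmem) hp) a b

/-- Wang's theorem: a polynomial map `𝕜ⁿ → 𝕜ⁿ` (with `𝕜 = ℝ` or `ℂ`) whose coordinates
have total degree at most 2 and whose Jacobian determinant vanishes nowhere is injective. -/
theorem stmt_7 (𝕜 : Type*) [RCLike 𝕜] (n : ℕ) (F : Fin n → MvPolynomial (Fin n) 𝕜)
    (hdeg : ∀ i, (F i).totalDegree ≤ 2)
    (hjac : ∀ x : Fin n → 𝕜,
      (Matrix.det (fun i j => MvPolynomial.eval x (pderiv j (F i)))) ≠ 0) :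
    Function.Injective (fun x : Fin n → 𝕜 => fun i => MvPolynomial.eval x (F i)) := by
  intro a b hab
  set m : Fin n → 𝕜 := fun i => (a i + b i) / 2 with hm
  have hmul : (Matrix.of fun i j => eval m (pderiv j (F i))).mulVec (a - b) = 0 := by
    funext i
    have h1 : eval a (F i) = eval b (F i) := congrFun hab i
    have := key_lemma (F i) (hdeg i) a b
    rw [h1, sub_self] at this
    simpa [Matrix.mulVec, dotProduct, mul_sub, Finset.sum_sub_distrib, hm] using this.symm
  have := Matrix.eq_zero_of_mulVec_eq_zero (hjac m) hmul
  exact sub_eq_zero.mp this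
end

section
/- Let f : ℝ³ → ℝ³ be defined by f(x, y, z) = (x, y, ((x² + y²)z² + z)²). For every w ≥ 0, there exists a sequence (xₖ, yₖ, zₖ) in ℝ³ with ‖(xₖ, yₖ, zₖ)‖ → ∞ and f(xₖ, yₖ, zₖ) → (0, 0, w); hence every point of the half-line {(0,0,w) : w ≥ 0} lies in the non-properness set of f. -/
open Filter

lemma key_root (a s : ℝ) (ha : a ≠ 0) (hs : 0 ≤ s) :
    a ^ 2 * (-(1 + Real.sqrt (1 + 4 * a ^ 2 * s)) / (2 * a ^ 2)) ^ 2 +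
      (-(1 + Real.sqrt (1 + 4 * a ^ 2 * s)) / (2 * a ^ 2)) = s := by
  have hr : Real.sqrt (1 + 4 * a ^ 2 * s) ^ 2 = 1 + 4 * a ^ 2 * s :=
    Real.sq_sqrt (by positivity)
  have ha2 : a ^ 2 ≠ 0 := pow_ne_zero 2 ha
  field_simp
  rw [show 1 + a ^ 2 * 4 * s = 1 + 4 * a ^ 2 * s by ring]
  nlinarith [hr]

/-- Every point `(0, 0, w)` with `w ≥ 0` lies in the non-properness set of
`f(x,y,z) = (x, y, ((x² + y²)z² + z)²)`. -/
theorem stmt_19 (w : ℝ) (hw : 0 ≤ w) :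
    ∃ z : ℕ → ℝ × ℝ × ℝ,
      Tendsto (fun k => ‖z k‖) atTop atTop ∧
      Tendsto (fun k => ((z k).1, (z k).2.1,
          (((z k).1 ^ 2 + (z k).2.1 ^ 2) * (z k).2.2 ^ 2 + (z k).2.2) ^ 2)) atTop
        (nhds ((0 : ℝ), (0 : ℝ), w)) := by
  set s : ℝ := Real.sqrt w with hs_def
  have hs : 0 ≤ s := Real.sqrt_nonneg w
  set a : ℕ → ℝ := fun k => 1 / (k + 1) with ha_def
  have ha_pos : ∀ k, 0 < a k := fun k => by positivity
  have ha_ne : ∀ k, a k ≠ 0 := fun k => (ha_pos k).ne'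
  set t : ℕ → ℝ := fun k =>
    -(1 + Real.sqrt (1 + 4 * (a k) ^ 2 * s)) / (2 * (a k) ^ 2) with ht_def
  refine ⟨fun k => (a k, 0, t k), ?_, ?_⟩
  · -- norm tends to infinity
    refine tendsto_atTop_mono (fun k => ?_) tendsto_natCast_atTop_atTop
    have h1 : |t k| ≤ ‖(a k, (0 : ℝ), t k)‖ := by
      calc |t k| = ‖((0 : ℝ), t k).2‖ := rfl
        _ ≤ ‖((0 : ℝ), t k)‖ := norm_snd_le _
        _ = ‖(a k, (0 : ℝ), t k).2‖ := rfl
        _ ≤ ‖(a k, (0 : ℝ), t k)‖ := norm_snd_le _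
    have hrnn : 0 ≤ Real.sqrt (1 + 4 * (a k) ^ 2 * s) := Real.sqrt_nonneg _
    have hak : (a k) ^ 2 = 1 / ((k : ℝ) + 1) ^ 2 := by
      simp [ha_def]
    have h2 : ((k : ℝ) + 1) ^ 2 / 2 ≤ |t k| := by
      have htneg : t k ≤ 0 := by
        apply div_nonpos_of_nonpos_of_nonneg
        · linarith
        · positivity
      rw [abs_of_nonpos htneg]
      have hval : -t k = (1 + Real.sqrt (1 + 4 * (a k) ^ 2 * s)) * (((k:ℝ)+1)^2 / 2) := by
        simp only [ht_def]
        rw [hak]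
        field_simp
      rw [hval]
      nlinarith [Real.sqrt_nonneg (1 + 4 * (a k) ^ 2 * s), sq_nonneg ((k:ℝ)+1)]
    have h3 : (k : ℝ) ≤ ((k : ℝ) + 1) ^ 2 / 2 := by nlinarith [sq_nonneg ((k : ℝ) - 1)]
    exact le_trans h3 (le_trans h2 h1)
  · -- image tends to (0,0,w)
    have heq : ∀ k, ((a k) ^ 2 + (0 : ℝ) ^ 2) * (t k) ^ 2 + t k = s := by
      intro k
      have := key_root (a k) s (ha_ne k) hs
      simpa [ht_def] using this
    have hfun : (fun k => ((a k, (0:ℝ), t k).1, (a k, (0:ℝ), t k).2.1,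
        (((a k, (0:ℝ), t k).1 ^ 2 + (a k, (0:ℝ), t k).2.1 ^ 2) * (a k, (0:ℝ), t k).2.2 ^ 2
          + (a k, (0:ℝ), t k).2.2) ^ 2)) =
        fun k => (a k, (0:ℝ), w) := by
      funext k
      simp only
      rw [heq k]
      rw [hs_def, Real.sq_sqrt hw]
    rw [hfun]
    have ha_lim : Tendsto a atTop (nhds 0) := by
      rw [ha_def]
      exact tendsto_one_div_add_atTop_nhds_zero_nat
    exact ha_lim.prodMk_nhds (tendsto_const_nhds.prodMk_nhds tendsto_const_nhds)
end
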